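/- Let G be an (n, d, λ)-graph with λ < d/50, and let U be a subset of the vertices of G of even size such that the induced subgraph G[U] has minimum degree at least 9d/10. Then G[U] contains a perfect matching. -/

import Mathlib

open SimpleGraph

/-- The adjacency matrix of a simple graph over `ℝ` is Hermitian. -/
theorem adjMatrix_isHermitian {n : ℕ} (G : SimpleGraph (Fin n)) [DecidableRel G.Adj] :
    (G.adjMatrix ℝ).IsHermitian :=
  Matrix.IsHermitian.ext fun i j => by
    simp [SimpleGraph.adjMatrix_apply, SimpleGraph.adj_comm]

/-- The eigenvalues of the adjacency matrix of `G`. -/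
noncomputable def adjEigenvalues {n : ℕ} (G : SimpleGraph (Fin n)) [DecidableRel G.Adj] :
    Fin n → ℝ :=
  (adjMatrix_isHermitian G).eigenvalues

/-- `G` is an `(n, d, λ)`-graph: a `d`-regular graph on `n` vertices all of whose
eigenvalues, except the largest one, are at most `lam` in absolute value. -/
def IsNDLGraph {n : ℕ} (G : SimpleGraph (Fin n)) [DecidableRel G.Adj] (d : ℕ) (lam : ℝ) : Prop :=
  G.IsRegularOfDegree d ∧
  ∃ i₀ : Fin n, ∀ i : Fin n, i ≠ i₀ → |adjEigenvalues G i| ≤ lam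

open Finset Matrix
open scoped RealInnerProductSpace


theorem adjMatrix_isHermitian' {n : ℕ} (G : SimpleGraph (Fin n)) [DecidableRel G.Adj] :
    (G.adjMatrix ℝ).IsHermitian :=
  Matrix.IsHermitian.ext fun i j => by
    simp [SimpleGraph.adjMatrix_apply, SimpleGraph.adj_comm]

variable {n d : ℕ} {lam : ℝ}

theorem spectral_expand (A : Matrix (Fin n) (Fin n) ℝ) (hA : A.IsHermitian)
    (x y : EuclideanSpace ℝ (Fin n)) :
    ⟪x, (WithLp.toLp 2 (A.mulVec y) : EuclideanSpace ℝ (Fin n))⟫ =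
      ∑ i, hA.eigenvalues i * (⟪hA.eigenvectorBasis i, x⟫ * ⟪hA.eigenvectorBasis i, y⟫) := by
  set b := hA.eigenvectorBasis with hb
  have hy : (WithLp.toLp 2 (A.mulVec y) : EuclideanSpace ℝ (Fin n)) =
      ∑ i, (⟪b i, y⟫ * hA.eigenvalues i) • (b i : EuclideanSpace ℝ (Fin n)) := by
    conv_lhs => rw [← b.sum_repr' y]
    rw [WithLp.ofLp_sum, Matrix.mulVec_sum, WithLp.toLp_sum]
    congr 1; funext i
    rw [WithLp.ofLp_smul, Matrix.mulVec_smul, hA.mulVec_eigenvectorBasis, smul_smul,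
      WithLp.toLp_smul, WithLp.toLp_ofLp]
  rw [hy, inner_sum]
  congr 1; funext i
  rw [real_inner_smul_right, real_inner_comm x (b i)]
  ring

section MixingSetup
variable (G : SimpleGraph (Fin n)) [DecidableRel G.Adj]

/-- number of (ordered) edges between B and C, as a real number -/
noncomputable def ew (B C : Finset (Fin n)) : ℝ :=
  ∑ u ∈ B, ∑ v ∈ C, if G.Adj u v then (1:ℝ) else 0

/-- indicator vector -/
def chi (B : Finset (Fin n)) : EuclideanSpace ℝ (Fin n) :=
  WithLp.toLp 2 (fun v => if v ∈ B then (1:ℝ) else 0)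

noncomputable def onesE : EuclideanSpace ℝ (Fin n) := WithLp.toLp 2 (fun _ => (1:ℝ))

lemma inner_onesE (x : EuclideanSpace ℝ (Fin n)) : ⟪(onesE : EuclideanSpace ℝ (Fin n)), x⟫ = ∑ i, x i := by
  simp [PiLp.inner_apply, onesE]

lemma inner_onesE_chi (B : Finset (Fin n)) :
    ⟪(onesE : EuclideanSpace ℝ (Fin n)), chi B⟫ = B.card := by
  rw [inner_onesE]
  simp [chi]

lemma inner_chi_chi (B : Finset (Fin n)) : ⟪chi B, chi B⟫ = B.card := by
  simp only [PiLp.inner_apply]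
  simp [chi, ite_and]

lemma ew_eq_inner (B C : Finset (Fin n)) :
    ew G B C = ⟪chi B, (WithLp.toLp 2 ((G.adjMatrix ℝ).mulVec (chi C)) : EuclideanSpace ℝ (Fin n))⟫ := by
  have h : ⟪chi B, (WithLp.toLp 2 ((G.adjMatrix ℝ).mulVec (chi C)) : EuclideanSpace ℝ (Fin n))⟫
      = (chi B) ⬝ᵥ ((G.adjMatrix ℝ).mulVec (chi C)) := by
    simp [PiLp.inner_apply, dotProduct, mul_comm]
  rw [h, SimpleGraph.dotProduct_mulVec_adjMatrix]
  rw [ew]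
  rw [← Finset.sum_subset (Finset.subset_univ B)]
  · apply Finset.sum_congr rfl
    intro u hu
    rw [← Finset.sum_subset (Finset.subset_univ C)]
    · apply Finset.sum_congr rfl
      intro v hv
      simp [chi, hu, hv]
    · intro v _ hv
      simp [chi, hv]
  · intro u _ hu
    simp [chi, hu]
end MixingSetup

section Mixing
variable (G : SimpleGraph (Fin n)) [DecidableRel G.Adj]

noncomputable def adjEigenvalues' (G : SimpleGraph (Fin n)) [DecidableRel G.Adj] : Fin n → ℝ :=
  (adjMatrix_isHermitian' G).eigenvalues

theorem mixing (hreg : G.IsRegularOfDegree d) {i₀ : Fin n}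
    (hei : ∀ i, i ≠ i₀ → |adjEigenvalues' G i| ≤ lam)
    (hlam0 : 0 ≤ lam) (hlamd : lam < d) (B C : Finset (Fin n)) :
    |ew G B C - d * B.card * C.card / n| ≤ lam * Real.sqrt (B.card * C.card) := by
  have hn : 0 < n := Fin.pos i₀
  have hnR : (0:ℝ) < n := by exact_mod_cast hn
  set A := G.adjMatrix ℝ with hAdef
  have hA : A.IsHermitian := adjMatrix_isHermitian' G
  set T : EuclideanSpace ℝ (Fin n) → EuclideanSpace ℝ (Fin n) := fun x => WithLp.toLp 2 (A.mulVec x) with hT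
  set b := hA.eigenvectorBasis with hb
  have hμ : hA.eigenvalues = adjEigenvalues' G := rfl
  have hexp : ∀ x y : EuclideanSpace ℝ (Fin n),
      ⟪x, T y⟫ = ∑ i, hA.eigenvalues i * (⟪b i, x⟫ * ⟪b i, y⟫) := fun x y =>
    spectral_expand A hA x y
  -- T ones = d • ones
  have h_ones : T onesE = (d:ℝ) • (onesE : EuclideanSpace ℝ (Fin n)) := by
    ext v
    show (A.mulVec (Function.const _ (1:ℝ))) v = (d:ℝ) • (1:ℝ)
    rw [SimpleGraph.adjMatrix_mulVec_const_apply_of_regular hreg]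
    simp
  -- symmetry
  have hsymm : ∀ x y : EuclideanSpace ℝ (Fin n), ⟪x, T y⟫ = ⟪T x, y⟫ := by
    intro x y
    rw [hexp x y, real_inner_comm y (T x), hexp y x]
    congr 1; funext i; ring
  -- T (b i) = μ i • b i
  have hTb : ∀ i, T (b i) = hA.eigenvalues i • (b i : EuclideanSpace ℝ (Fin n)) := by
    intro i
    ext v
    have := congrFun (hA.mulVec_eigenvectorBasis i) v
    simpa using this
  -- eigenvector components of ones vanish off i₀
  have hio : ∀ i, i ≠ i₀ → ⟪b i, (onesE : EuclideanSpace ℝ (Fin n))⟫ = 0 := by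
    intro i hi
    have h1 : ⟪b i, T onesE⟫ = (d:ℝ) * ⟪b i, (onesE : EuclideanSpace ℝ (Fin n))⟫ := by
      rw [h_ones, real_inner_smul_right]
    have h2 : ⟪b i, T onesE⟫ = hA.eigenvalues i * ⟪b i, (onesE : EuclideanSpace ℝ (Fin n))⟫ := by
      rw [hsymm, hTb i, real_inner_smul_left]
    have hne : (d:ℝ) ≠ hA.eigenvalues i := by
      intro h
      have h3 := hei i hi
      rw [hμ] at h
      rw [← h] at h3
      have : (d:ℝ) ≤ lam := le_trans (le_abs_self _) h3
      linarith
    have h4 := h1.symm.trans h2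
    rcases mul_eq_mul_right_iff.mp h4 with h | h
    · exact absurd h hne
    · exact h
  -- expansion of ⟪ones, x⟫
  have hrepr : ∀ x : EuclideanSpace ℝ (Fin n),
      ⟪(onesE : EuclideanSpace ℝ (Fin n)), x⟫
        = ⟪(onesE : EuclideanSpace ℝ (Fin n)), b i₀⟫ * ⟪b i₀, x⟫ := by
    intro x
    rw [← b.sum_inner_mul_inner (onesE) x]
    rw [Finset.sum_eq_single i₀]
    · intro i _ hi
      rw [real_inner_comm, hio i hi, zero_mul]
    · intro h; exact absurd (Finset.mem_univ i₀) h
  have hc0 : ⟪(onesE : EuclideanSpace ℝ (Fin n)), b i₀⟫ ≠ 0 := by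
    intro h
    have h5 := hrepr (onesE)
    rw [h, zero_mul, inner_onesE] at h5
    simp [onesE] at h5
    omega
  have horth : ∀ x : EuclideanSpace ℝ (Fin n),
      ⟪(onesE : EuclideanSpace ℝ (Fin n)), x⟫ = 0 → ⟪b i₀, x⟫ = 0 := by
    intro x hx
    have := (hrepr x).symm.trans hx
    rcases mul_eq_zero.mp this with h | h
    · exact absurd h hc0
    · exact h
  -- Parseval
  have hpars : ∀ x : EuclideanSpace ℝ (Fin n), ∑ i, ⟪b i, x⟫ ^ 2 = ‖x‖ ^ 2 := by
    intro x
    have h6 := b.sum_inner_mul_inner x x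
    rw [real_inner_self_eq_norm_sq] at h6
    rw [← h6]
    congr 1; funext i
    rw [real_inner_comm x (b i)]; ring
  -- key spectral bound
  have key : ∀ x y : EuclideanSpace ℝ (Fin n),
      ⟪(onesE : EuclideanSpace ℝ (Fin n)), x⟫ = 0 →
      ⟪(onesE : EuclideanSpace ℝ (Fin n)), y⟫ = 0 →
      |⟪x, T y⟫| ≤ lam * (‖x‖ * ‖y‖) := by
    intro x y hx hy
    rw [hexp x y]
    have step1 : |∑ i, hA.eigenvalues i * (⟪b i, x⟫ * ⟪b i, y⟫)|
        ≤ ∑ i, lam * (|⟪b i, x⟫| * |⟪b i, y⟫|) := by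
      refine (Finset.abs_sum_le_sum_abs _ _).trans (Finset.sum_le_sum ?_)
      intro i _
      rw [abs_mul, abs_mul]
      by_cases hi : i = i₀
      · subst hi
        rw [horth x hx]
        simp only [abs_zero, zero_mul, mul_zero]
        positivity
      · have := hei i hi
        rw [← hμ] at this
        exact mul_le_mul_of_nonneg_right this (mul_nonneg (abs_nonneg _) (abs_nonneg _))
    refine step1.trans ?_
    rw [← Finset.mul_sum]
    refine mul_le_mul_of_nonneg_left ?_ hlam0
    -- Cauchy-Schwarz
    have hcs := Finset.sum_mul_sq_le_sq_mul_sq Finset.univ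
      (fun i => |⟪b i, x⟫|) (fun i => |⟪b i, y⟫|)
    have hsx : ∑ i, |⟪b i, x⟫| ^ 2 = ‖x‖ ^ 2 := by
      rw [← hpars x]; congr 1; funext i; rw [sq_abs]
    have hsy : ∑ i, |⟪b i, y⟫| ^ 2 = ‖y‖ ^ 2 := by
      rw [← hpars y]; congr 1; funext i; rw [sq_abs]
    rw [hsx, hsy] at hcs
    have h7 : (0:ℝ) ≤ ∑ i, |⟪b i, x⟫| * |⟪b i, y⟫| :=
      Finset.sum_nonneg fun i _ => mul_nonneg (abs_nonneg _) (abs_nonneg _)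
    nlinarith [norm_nonneg x, norm_nonneg y, mul_nonneg (norm_nonneg x) (norm_nonneg y)]
  -- centered indicators
  set cB : ℝ := (B.card : ℝ) / n with hcB
  set cC : ℝ := (C.card : ℝ) / n with hcC
  set f : EuclideanSpace ℝ (Fin n) := chi B - cB • onesE with hf
  set g : EuclideanSpace ℝ (Fin n) := chi C - cC • onesE with hg
  have honesones : ⟪(onesE : EuclideanSpace ℝ (Fin n)), (onesE : EuclideanSpace ℝ (Fin n))⟫ = n := by
    rw [inner_onesE]; simp [onesE]
  have hfo : ⟪(onesE : EuclideanSpace ℝ (Fin n)), f⟫ = 0 := by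
    rw [hf, inner_sub_right, real_inner_smul_right, inner_onesE_chi, honesones, hcB]
    field_simp
    ring
  have hgo : ⟪(onesE : EuclideanSpace ℝ (Fin n)), g⟫ = 0 := by
    rw [hg, inner_sub_right, real_inner_smul_right, inner_onesE_chi, honesones, hcC]
    field_simp
    ring
  -- T is additive/linear enough
  have hTlin : ∀ (u v : EuclideanSpace ℝ (Fin n)) (c : ℝ), T (u - c • v) = T u - c • T v := by
    intro u v c
    show WithLp.toLp 2 (A.mulVec (WithLp.ofLp u - c • WithLp.ofLp v)) = _
    rw [Matrix.mulVec_sub]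
    rw [Matrix.mulVec_smul]
    rfl
  -- the four inner products
  have hchiones : ∀ D : Finset (Fin n), ⟪chi D, (onesE : EuclideanSpace ℝ (Fin n))⟫ = D.card := by
    intro D
    rw [real_inner_comm onesE (chi D), inner_onesE_chi]
  have e1 : ⟪chi B, T (chi C)⟫ = ew G B C := (ew_eq_inner G B C).symm
  have e2 : ⟪chi B, T (onesE : EuclideanSpace ℝ (Fin n))⟫ = d * B.card := by
    rw [h_ones, real_inner_smul_right, hchiones]
  have e3 : ⟪(onesE : EuclideanSpace ℝ (Fin n)), T (chi C)⟫ = d * C.card := by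
    rw [hsymm, h_ones, real_inner_smul_left, inner_onesE_chi]
  have e4 : ⟪(onesE : EuclideanSpace ℝ (Fin n)), T (onesE : EuclideanSpace ℝ (Fin n))⟫ = d * n := by
    rw [h_ones, real_inner_smul_right, honesones]
  have hmain : ⟪f, T g⟫ = ew G B C - d * B.card * C.card / n := by
    rw [hf, hg, hTlin]
    simp only [inner_sub_left, inner_sub_right, real_inner_smul_left, real_inner_smul_right]
    rw [e1, e2, e3, e4, hcB, hcC]
    field_simp
    ring
  -- norms
  have hnormsq : ∀ D : Finset (Fin n),
      ⟪(chi D - ((D.card:ℝ)/n) • onesE : EuclideanSpace ℝ (Fin n)),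
        (chi D - ((D.card:ℝ)/n) • onesE : EuclideanSpace ℝ (Fin n))⟫ = D.card - (D.card:ℝ)^2/n := by
    intro D
    simp only [inner_sub_left, inner_sub_right, real_inner_smul_left, real_inner_smul_right]
    rw [inner_chi_chi, inner_onesE_chi, hchiones, honesones]
    rw [div_mul_cancel₀ _ hnR.ne']
    ring
  have hnormf : ‖f‖ ≤ Real.sqrt B.card := by
    have h9 : ‖f‖ ^ 2 ≤ (B.card : ℝ) := by
      rw [← real_inner_self_eq_norm_sq, hf, hcB, hnormsq B]
      have : 0 ≤ (B.card:ℝ)^2/n := div_nonneg (sq_nonneg _) (Nat.cast_nonneg _)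
      linarith
    calc ‖f‖ = Real.sqrt (‖f‖ ^ 2) := by rw [Real.sqrt_sq (norm_nonneg f)]
    _ ≤ Real.sqrt B.card := Real.sqrt_le_sqrt h9
  have hnormg : ‖g‖ ≤ Real.sqrt C.card := by
    have h9 : ‖g‖ ^ 2 ≤ (C.card : ℝ) := by
      rw [← real_inner_self_eq_norm_sq, hg, hcC, hnormsq C]
      have : 0 ≤ (C.card:ℝ)^2/n := div_nonneg (sq_nonneg _) (Nat.cast_nonneg _)
      linarith
    calc ‖g‖ = Real.sqrt (‖g‖ ^ 2) := by rw [Real.sqrt_sq (norm_nonneg g)]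
    _ ≤ Real.sqrt C.card := Real.sqrt_le_sqrt h9
  -- conclude
  have := key f g hfo hgo
  rw [hmain] at this
  refine this.trans ?_
  refine mul_le_mul_of_nonneg_left ?_ hlam0
  calc ‖f‖ * ‖g‖ ≤ Real.sqrt B.card * Real.sqrt C.card := by
        apply mul_le_mul hnormf hnormg (norm_nonneg g) (Real.sqrt_nonneg _)
  _ = Real.sqrt (B.card * C.card) := (Real.sqrt_mul (Nat.cast_nonneg _) _).symm
end Mixing

section Combi
variable (G : SimpleGraph (Fin n)) [DecidableRel G.Adj]

/-- real-valued degree into a set -/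
noncomputable def degR (v : Fin n) (C : Finset (Fin n)) : ℝ :=
  ∑ w ∈ C, if G.Adj v w then (1:ℝ) else 0

lemma degR_eq_card (v : Fin n) (C : Finset (Fin n)) :
    degR G v C = ((G.neighborFinset v ∩ C).card : ℝ) := by
  rw [degR, Finset.sum_boole]
  congr 2
  ext w
  simp [SimpleGraph.mem_neighborFinset, and_comm]

lemma degR_nonneg (v : Fin n) (C : Finset (Fin n)) : 0 ≤ degR G v C := by
  rw [degR_eq_card]; positivity

lemma degR_le_d (hreg : G.IsRegularOfDegree d) (v : Fin n) (C : Finset (Fin n)) :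
    degR G v C ≤ d := by
  rw [degR_eq_card]
  have h1 : (G.neighborFinset v ∩ C).card ≤ (G.neighborFinset v).card :=
    Finset.card_le_card Finset.inter_subset_left
  have h2 : (G.neighborFinset v).card = d := hreg v
  exact_mod_cast h1.trans_eq h2

lemma degR_mono (v : Fin n) {C D : Finset (Fin n)} (h : C ⊆ D) : degR G v C ≤ degR G v D := by
  rw [degR, degR]
  apply Finset.sum_le_sum_of_subset_of_nonneg h
  intro i _ _
  positivity

lemma degR_union (v : Fin n) {C D : Finset (Fin n)} (h : Disjoint C D) :
    degR G v (C ∪ D) = degR G v C + degR G v D := by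
  rw [degR, degR, degR, Finset.sum_union h]

lemma degR_insert (v : Fin n) {c : Fin n} {C : Finset (Fin n)} (h : c ∉ C) :
    degR G v (insert c C) = (if G.Adj v c then (1:ℝ) else 0) + degR G v C :=
  Finset.sum_insert h

lemma ew_eq_sum_degR (B C : Finset (Fin n)) : ew G B C = ∑ u ∈ B, degR G u C := rfl

lemma ew_nonneg (B C : Finset (Fin n)) : 0 ≤ ew G B C :=
  Finset.sum_nonneg fun u _ => degR_nonneg G u C

lemma ew_comm (B C : Finset (Fin n)) : ew G B C = ew G C B := by
  rw [ew, ew, Finset.sum_comm]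
  apply Finset.sum_congr rfl
  intro u _
  apply Finset.sum_congr rfl
  intro v _
  simp_rw [SimpleGraph.adj_comm]

lemma ew_insert_left {a : Fin n} {B : Finset (Fin n)} (h : a ∉ B) (C : Finset (Fin n)) :
    ew G (insert a B) C = degR G a C + ew G B C :=
  Finset.sum_insert h

lemma ew_insert_right (B : Finset (Fin n)) {c : Fin n} {C : Finset (Fin n)} (h : c ∉ C) :
    ew G B (insert c C) = degR G c B + ew G B C := by
  rw [ew_comm, ew_insert_left G h, ew_comm]

lemma ew_zero {B C : Finset (Fin n)} (h : ∀ u ∈ B, ∀ v ∈ C, ¬ G.Adj u v) : ew G B C = 0 := by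
  rw [ew]
  apply Finset.sum_eq_zero
  intro u hu
  apply Finset.sum_eq_zero
  intro v hv
  simp [h u hu v hv]

lemma ew_le_sum_bound {B C : Finset (Fin n)} {c : ℝ} (h : ∀ u ∈ B, degR G u C ≤ c) :
    ew G B C ≤ c * B.card := by
  rw [ew_eq_sum_degR]
  calc ∑ u ∈ B, degR G u C ≤ ∑ _u ∈ B, c := Finset.sum_le_sum h
  _ = c * B.card := by rw [Finset.sum_const, nsmul_eq_mul, mul_comm]

lemma ew_ge_sum_bound {B C : Finset (Fin n)} {c : ℝ} (h : ∀ u ∈ B, c ≤ degR G u C) :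
    c * B.card ≤ ew G B C := by
  rw [ew_eq_sum_degR]
  calc c * B.card = ∑ _u ∈ B, c := by rw [Finset.sum_const, nsmul_eq_mul, mul_comm]
  _ ≤ ∑ u ∈ B, degR G u C := Finset.sum_le_sum h

end Combi

section Swap
variable (G : SimpleGraph (Fin n)) [DecidableRel G.Adj]

lemma swap_identity {U X : Finset (Fin n)} (hXU : X ⊆ U) {v w : Fin n}
    (hv : v ∈ X) (hw : w ∈ U \ X) :
    ew G (insert w (X.erase v)) (U \ insert w (X.erase v)) =
      ew G X (U \ X) + ((degR G v X - degR G v (U \ X)) + (degR G w (U \ X) - degR G w X)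
        + 2 * (if G.Adj v w then (1:ℝ) else 0)) := by
  have hwU : w ∈ U := (Finset.mem_sdiff.mp hw).1
  have hwX : w ∉ X := (Finset.mem_sdiff.mp hw).2
  have hvU : v ∈ U := hXU hv
  have hvw : v ≠ w := fun h => hwX (h ▸ hv)
  set X₀ := X.erase v with hX₀
  set Y := U \ X with hYdef
  set Y₀ := Y.erase w with hY₀
  have hvX₀ : v ∉ X₀ := Finset.notMem_erase v X
  have hwX₀ : w ∉ X₀ := fun h => hwX (Finset.erase_subset v X h)
  have hwY₀ : w ∉ Y₀ := Finset.notMem_erase w Y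
  have hvY : v ∉ Y := fun h => (Finset.mem_sdiff.mp h).2 hv
  have hvY₀ : v ∉ Y₀ := fun h => hvY (Finset.erase_subset w Y h)
  have hX : X = insert v X₀ := (Finset.insert_erase hv).symm
  have hY : Y = insert w Y₀ := (Finset.insert_erase hw).symm
  have hY' : U \ insert w X₀ = insert v Y₀ := by
    ext a
    constructor
    · intro ha
      rcases Finset.mem_sdiff.mp ha with ⟨haU, hna⟩
      by_cases hav : a = v
      · exact hav ▸ Finset.mem_insert_self v Y₀
      · have haw : a ≠ w := fun h => hna (h ▸ Finset.mem_insert_self w X₀)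
        have haX : a ∉ X := fun h => hna (Finset.mem_insert_of_mem (Finset.mem_erase.mpr ⟨hav, h⟩))
        exact Finset.mem_insert_of_mem (Finset.mem_erase.mpr ⟨haw, Finset.mem_sdiff.mpr ⟨haU, haX⟩⟩)
    · intro ha
      rcases Finset.mem_insert.mp ha with rfl | ha
      · refine Finset.mem_sdiff.mpr ⟨hvU, fun h => ?_⟩
        rcases Finset.mem_insert.mp h with h | h
        · exact hvw h
        · exact hvX₀ h
      · rcases Finset.mem_erase.mp ha with ⟨haw, haY⟩
        rcases Finset.mem_sdiff.mp haY with ⟨haU, haX⟩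
        refine Finset.mem_sdiff.mpr ⟨haU, fun h => ?_⟩
        rcases Finset.mem_insert.mp h with h | h
        · exact haw h
        · exact haX (Finset.erase_subset v X h)
  have havv : (if G.Adj v v then (1:ℝ) else 0) = 0 := by simp
  have haww : (if G.Adj w w then (1:ℝ) else 0) = 0 := by simp
  have havw : (if G.Adj w v then (1:ℝ) else 0) = (if G.Adj v w then (1:ℝ) else 0) := by
    simp_rw [SimpleGraph.adj_comm]
  have lhs_eq : ew G (insert w X₀) (U \ insert w X₀)
      = (if G.Adj v w then (1:ℝ) else 0) + degR G w Y₀ + degR G v X₀ + ew G X₀ Y₀ := by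
    rw [hY', ew_insert_left G hwX₀, degR_insert G w hvY₀, ew_insert_right G X₀ hvY₀, havw]
    ring
  have rhs_eq : ew G X Y = (if G.Adj v w then (1:ℝ) else 0) + degR G v Y₀ + degR G w X₀ + ew G X₀ Y₀ := by
    rw [hX, hY, ew_insert_left G hvX₀, degR_insert G v hwY₀, ew_insert_right G X₀ hwY₀]
    ring
  have d1 : degR G v X = degR G v X₀ := by
    rw [hX, degR_insert G v hvX₀, havv, zero_add]
  have d2 : degR G w Y = degR G w Y₀ := by
    rw [hY, degR_insert G w hwY₀, haww, zero_add]
  have d3 : degR G v Y = (if G.Adj v w then (1:ℝ) else 0) + degR G v Y₀ := by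
    rw [hY, degR_insert G v hwY₀]
  have d4 : degR G w X = (if G.Adj v w then (1:ℝ) else 0) + degR G w X₀ := by
    rw [hX, degR_insert G w hvX₀, havw]
  rw [lhs_eq, rhs_eq, d1, d2, d3, d4]
  ring
end Swap

section Partition
variable (G : SimpleGraph (Fin n)) [DecidableRel G.Adj]

lemma exists_balanced_partition (hreg : G.IsRegularOfDegree d) {i₀ : Fin n}
    (hei : ∀ i, i ≠ i₀ → |adjEigenvalues' G i| ≤ lam)
    (hlam0 : 0 ≤ lam) (hlam50 : lam < (d:ℝ)/50) (hd : 0 < d)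
    {U : Finset (Fin n)} {m : ℕ} (hm : U.card = 2*m) (hmn : (11:ℝ)/25 * n < m)
    (hU : ∀ v ∈ U, 9*(d:ℝ)/10 ≤ degR G v U) :
    ∃ X ⊆ U, X.card = m ∧ (U \ X).card = m ∧
      (∀ v ∈ X, (d:ℝ)/5 ≤ degR G v (U \ X)) ∧ (∀ w ∈ U \ X, (d:ℝ)/5 ≤ degR G w X) := by
  have hn : 0 < n := Fin.pos i₀
  have hnR : (0:ℝ) < n := by exact_mod_cast hn
  have hdR : (0:ℝ) < d := by exact_mod_cast hd
  have hlamd : lam < (d:ℝ) := by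
    have : (d:ℝ)/50 ≤ d := by linarith
    linarith
  have hm0 : 0 < m := by
    by_contra h
    push_neg at h
    interval_cases m
    simp at hmn
    linarith
  have hmR : (0:ℝ) < m := by exact_mod_cast hm0
  have hmU : m ≤ U.card := by omega
  obtain ⟨W, hWU, hWm⟩ := Finset.exists_subset_card_eq hmU
  have hPne : (U.powersetCard m).Nonempty :=
    ⟨W, Finset.mem_powersetCard.mpr ⟨hWU, hWm⟩⟩
  obtain ⟨X, hXmem, hXmax⟩ := Finset.exists_max_image (U.powersetCard m)
    (fun X => ew G X (U \ X)) hPne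
  obtain ⟨hXU, hXm⟩ := Finset.mem_powersetCard.mp hXmem
  have hYm : (U \ X).card = m := by
    rw [Finset.card_sdiff_of_subset hXU, hm, hXm]
    omega
  set Y := U \ X with hYdef
  have hdisj : Disjoint X Y := Finset.disjoint_sdiff
  have hunion : X ∪ Y = U := Finset.union_sdiff_of_subset hXU
  -- swap inequality
  have hswap : ∀ v ∈ X, ∀ w ∈ Y,
      (degR G v X - degR G v Y) + (degR G w Y - degR G w X) ≤ 0 := by
    intro v hv w hw
    have hwU : w ∈ U := (Finset.mem_sdiff.mp hw).1
    have hwX : w ∉ X := (Finset.mem_sdiff.mp hw).2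
    set X' := insert w (X.erase v) with hX'
    have hX'mem : X' ∈ U.powersetCard m := by
      refine Finset.mem_powersetCard.mpr ⟨?_, ?_⟩
      · intro a ha
        rcases Finset.mem_insert.mp ha with rfl | ha
        · exact hwU
        · exact hXU (Finset.erase_subset v X ha)
      · rw [Finset.card_insert_of_notMem (fun h => hwX (Finset.erase_subset v X h)),
          Finset.card_erase_of_mem hv, hXm]
        omega
    have hle := hXmax X' hX'mem
    rw [swap_identity G hXU hv hw] at hle
    have ha : (0:ℝ) ≤ 2 * (if G.Adj v w then (1:ℝ) else 0) := by positivity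
    simp only [← hYdef] at hle
    linarith
  -- degrees within U
  have hdegsplit : ∀ u ∈ U, degR G u X + degR G u Y = degR G u U := by
    intro u _
    rw [← hunion, degR_union G u hdisj]
  have hdegU : ∀ u ∈ U, degR G u U ≤ d := fun u _ => degR_le_d G hreg u U
  -- mixing lower bound for ew S S with |S| = m
  have hmix : ∀ S : Finset (Fin n), S.card = m → (21:ℝ)/50 * (d * m) < ew G S S := by
    intro S hS
    have h1 := mixing G hreg hei hlam0 hlamd S S
    rw [hS] at h1
    have h2 : Real.sqrt ((m:ℝ) * m) = m := Real.sqrt_mul_self (by positivity)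
    rw [h2] at h1
    have h3 : (d:ℝ) * m * m / n - lam * m ≤ ew G S S := by
      have := abs_le.mp h1
      linarith [this.1]
    have h4 : (11:ℝ)/25 * d * m ≤ d * m * m / n := by
      rw [le_div_iff₀ hnR]
      have h5 := mul_le_mul_of_nonneg_left (le_of_lt hmn) (le_of_lt (mul_pos hdR hmR))
      nlinarith [h5]
    have h6 : lam * m < d/50 * m := by
      exact mul_lt_mul_of_pos_right hlam50 hmR
    calc (21:ℝ)/50 * (d * m) = 11/25 * d * m - d/50 * m := by ring
    _ < d * m * m / n - lam * m := by linarith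
    _ ≤ ew G S S := h3
  -- first claim
  refine ⟨X, hXU, hXm, hYm, ?_, ?_⟩
  · intro v hv
    by_contra hlt
    push_neg at hlt
    have hvU : v ∈ U := hXU hv
    have hvX : 7*(d:ℝ)/10 ≤ degR G v X := by
      have := hdegsplit v hvU
      have := hU v hvU
      linarith
    have hYbound : ∀ w ∈ Y, degR G w Y ≤ (d:ℝ)/4 := by
      intro w hw
      have h1 := hswap v hv w hw
      have h2 := hdegsplit w (Finset.mem_sdiff.mp hw).1
      have h3 := hdegU w (Finset.mem_sdiff.mp hw).1
      linarith
    have h4 : ew G Y Y ≤ (d:ℝ)/4 * m := by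
      have := ew_le_sum_bound G hYbound
      rw [hYm] at this
      linarith
    have h5 := hmix Y hYm
    nlinarith
  · intro w hw
    by_contra hlt
    push_neg at hlt
    have hwU : w ∈ U := (Finset.mem_sdiff.mp hw).1
    have hwY : 7*(d:ℝ)/10 ≤ degR G w Y := by
      have := hdegsplit w hwU
      have := hU w hwU
      linarith
    have hXbound : ∀ v ∈ X, degR G v X ≤ (d:ℝ)/4 := by
      intro v hv
      have h1 := hswap v hv w hw
      have h2 := hdegsplit v (hXU hv)
      have h3 := hdegU v (hXU hv)
      linarith
    have h4 : ew G X X ≤ (d:ℝ)/4 * m := by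
      have := ew_le_sum_bound G hXbound
      rw [hXm] at this
      linarith
    have h5 := hmix X hXm
    nlinarith
end Partition

section Hall
variable (G : SimpleGraph (Fin n)) [DecidableRel G.Adj]

lemma violator_big (hreg : G.IsRegularOfDegree d) {i₀ : Fin n}
    (hei : ∀ i, i ≠ i₀ → |adjEigenvalues' G i| ≤ lam)
    (hlam0 : 0 ≤ lam) (hlam50 : lam < (d:ℝ)/50) (hd : 0 < d)
    {P Q A : Finset (Fin n)} (hdeg : ∀ a ∈ P, (d:ℝ)/5 ≤ degR G a Q)
    (hA : A ⊆ P) (hAne : A.Nonempty)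
    (hbad : (A.biUnion (fun a => G.neighborFinset a ∩ Q)).card < A.card) :
    (9:ℝ)/50 * n ≤ ((A.biUnion (fun a => G.neighborFinset a ∩ Q)).card : ℝ) := by
  have hn : 0 < n := Fin.pos i₀
  have hnR : (0:ℝ) < n := by exact_mod_cast hn
  have hdR : (0:ℝ) < d := by exact_mod_cast hd
  have hlamd : lam < (d:ℝ) := by linarith
  set C := A.biUnion (fun a => G.neighborFinset a ∩ Q) with hC
  have hAR : (0:ℝ) < A.card := by
    have := Finset.card_pos.mpr hAne
    exact_mod_cast this
  -- lower bound on ew A C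
  have hlow : (d:ℝ)/5 * A.card ≤ ew G A C := by
    apply ew_ge_sum_bound
    intro a ha
    have h1 : G.neighborFinset a ∩ Q ⊆ G.neighborFinset a ∩ C := by
      intro x hx
      exact Finset.mem_inter.mpr ⟨(Finset.mem_inter.mp hx).1,
        Finset.mem_biUnion.mpr ⟨a, ha, hx⟩⟩
    have h2 : degR G a Q ≤ degR G a C := by
      rw [degR_eq_card, degR_eq_card]
      exact_mod_cast Finset.card_le_card h1
    exact (hdeg a (hA ha)).trans h2
  -- upper bound
  have hup := mixing G hreg hei hlam0 hlamd A C
  have hsq : Real.sqrt ((A.card : ℝ) * C.card) ≤ A.card := by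
    have h1 : (A.card : ℝ) * C.card ≤ A.card * A.card := by
      have : (C.card : ℝ) ≤ A.card := by exact_mod_cast le_of_lt hbad
      nlinarith
    calc Real.sqrt ((A.card : ℝ) * C.card) ≤ Real.sqrt ((A.card:ℝ) * A.card) :=
          Real.sqrt_le_sqrt h1
    _ = A.card := Real.sqrt_mul_self (by positivity)
  have hup2 : ew G A C ≤ (d:ℝ) * A.card * C.card / n + (d:ℝ)/50 * A.card := by
    have h1 := (abs_le.mp hup).2
    have h2 : lam * Real.sqrt ((A.card:ℝ) * C.card) ≤ (d:ℝ)/50 * A.card := by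
      calc lam * Real.sqrt ((A.card:ℝ) * C.card) ≤ lam * A.card :=
            mul_le_mul_of_nonneg_left hsq hlam0
      _ ≤ (d:ℝ)/50 * A.card := mul_le_mul_of_nonneg_right (le_of_lt hlam50) (le_of_lt hAR)
    linarith
  -- combine: d/5 * |A| ≤ d |A| |C| / n + d/50 |A|
  have hcomb : (d:ℝ)/5 * A.card ≤ (d:ℝ) * A.card * C.card / n + (d:ℝ)/50 * A.card :=
    hlow.trans hup2
  -- divide by d * |A| > 0
  by_contra hcon
  push_neg at hcon
  have h3 : (d:ℝ) * A.card * C.card / n < (d:ℝ) * A.card * (9/50) := by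
    rw [div_lt_iff₀ hnR]
    have h4 : (C.card : ℝ) < 9/50 * n := hcon
    nlinarith [mul_pos hdR hAR]
  nlinarith [mul_pos hdR hAR]

lemma hall_ok (hreg : G.IsRegularOfDegree d) {i₀ : Fin n}
    (hei : ∀ i, i ≠ i₀ → |adjEigenvalues' G i| ≤ lam)
    (hlam0 : 0 ≤ lam) (hlam50 : lam < (d:ℝ)/50) (hd : 0 < d)
    {U X : Finset (Fin n)} {m : ℕ} (hXU : X ⊆ U) (hXm : X.card = m)
    (hYm : (U \ X).card = m)
    (hdegXY : ∀ v ∈ X, (d:ℝ)/5 ≤ degR G v (U \ X))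
    (hdegYX : ∀ w ∈ U \ X, (d:ℝ)/5 ≤ degR G w X)
    {A : Finset (Fin n)} (hA : A ⊆ X) :
    A.card ≤ (A.biUnion (fun a => G.neighborFinset a ∩ (U \ X))).card := by
  have hn : 0 < n := Fin.pos i₀
  have hnR : (0:ℝ) < n := by exact_mod_cast hn
  have hdR : (0:ℝ) < d := by exact_mod_cast hd
  have hlamd : lam < (d:ℝ) := by linarith
  set Y := U \ X with hYdef
  by_contra hbad
  push_neg at hbad
  have hAne : A.Nonempty := by
    rcases Finset.eq_empty_or_nonempty A with rfl | h
    · simp at hbad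
    · exact h
  set C := A.biUnion (fun a => G.neighborFinset a ∩ Y) with hC
  have big1 : (9:ℝ)/50 * n ≤ C.card :=
    violator_big G hreg hei hlam0 hlam50 hd hdegXY hA hAne hbad
  have hCY : C ⊆ Y := by
    intro x hx
    rcases Finset.mem_biUnion.mp hx with ⟨a, _, hx⟩
    exact (Finset.mem_inter.mp hx).2
  set B := Y \ C with hB
  have hAX : A.card ≤ m := hXm ▸ Finset.card_le_card hA
  have hBcard : B.card = m - C.card := by rw [hB, Finset.card_sdiff_of_subset hCY, hYm]
  have hBne : B.Nonempty := by
    rw [← Finset.card_pos, hBcard]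
    omega
  have hnoedge : ∀ a ∈ A, ∀ b ∈ B, ¬ G.Adj a b := by
    intro a ha b hb hadj
    have hbY : b ∈ Y := (Finset.mem_sdiff.mp hb).1
    have hbC : b ∈ C := Finset.mem_biUnion.mpr
      ⟨a, ha, Finset.mem_inter.mpr ⟨(G.mem_neighborFinset a b).mpr hadj, hbY⟩⟩
    exact (Finset.mem_sdiff.mp hb).2 hbC
  -- B is a violator on the other side
  set C' := B.biUnion (fun b => G.neighborFinset b ∩ X) with hC'
  have hC'sub : C' ⊆ X \ A := by
    intro x hx
    rcases Finset.mem_biUnion.mp hx with ⟨b, hb, hx⟩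
    have hxX : x ∈ X := (Finset.mem_inter.mp hx).2
    refine Finset.mem_sdiff.mpr ⟨hxX, fun hxA => ?_⟩
    have hadj : G.Adj b x := (G.mem_neighborFinset b x).mp (Finset.mem_inter.mp hx).1
    exact hnoedge x hxA b hb hadj.symm
  have hbad' : C'.card < B.card := by
    have h1 : C'.card ≤ (X \ A).card := Finset.card_le_card hC'sub
    have h2 : (X \ A).card = m - A.card := by rw [Finset.card_sdiff_of_subset hA, hXm]
    have h3 : C.card < A.card := hbad
    rw [hBcard]
    omega
  have hBY : B ⊆ Y := Finset.sdiff_subset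
  have big2 : (9:ℝ)/50 * n ≤ C'.card :=
    violator_big G hreg hei hlam0 hlam50 hd hdegYX hBY hBne hbad'
  -- sizes
  have hAbig : (9:ℝ)/50 * n < A.card := by
    have : (C.card : ℝ) < A.card := by exact_mod_cast hbad
    linarith
  have hBbig : (9:ℝ)/50 * n < B.card := by
    have : (C'.card : ℝ) < B.card := by exact_mod_cast hbad'
    linarith
  -- no edges between A and B, contradiction with mixing
  have hzero : ew G A B = 0 := ew_zero G hnoedge
  have hmixAB := mixing G hreg hei hlam0 hlamd A B
  rw [hzero] at hmixAB
  set s := Real.sqrt ((A.card:ℝ) * B.card) with hs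
  have h90 : (0:ℝ) ≤ 9/50 * n := by positivity
  have hApos : (0:ℝ) < A.card := lt_of_le_of_lt h90 hAbig
  have hBpos : (0:ℝ) < B.card := lt_of_le_of_lt h90 hBbig
  have hABpos : (0:ℝ) < (A.card:ℝ) * B.card := mul_pos hApos hBpos
  have hspos : 0 < s := Real.sqrt_pos.mpr hABpos
  have hs2 : s^2 = (A.card:ℝ) * B.card := Real.sq_sqrt (le_of_lt hABpos)
  have habs : (d:ℝ) * A.card * B.card / n ≤ lam * s := by
    have h1 := (abs_le.mp hmixAB).1
    linarith
  have h2 : (d:ℝ) * s^2 / n < (d/50) * s := by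
    have h1 : (d:ℝ) * s^2 / n ≤ lam * s := by
      rw [hs2]
      calc (d:ℝ) * (A.card * B.card) / n = d * A.card * B.card / n := by ring
      _ ≤ lam * s := habs
    have h3 : lam * s < (d/50) * s := mul_lt_mul_of_pos_right hlam50 hspos
    linarith
  have h4 : s < n / 50 := by
    have h5 : (d:ℝ) * s^2 < (d/50) * s * n := (div_lt_iff₀ hnR).mp h2
    have h6 : s * s < s * (n/50) := by
      have := (mul_lt_mul_iff_right₀ hdR).mp (by nlinarith : (d:ℝ) * (s*s) < d * (s * (n/50)))
      exact this
    exact (mul_lt_mul_iff_right₀ hspos).mp h6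
  have h7 : s^2 < ((n:ℝ)/50)^2 := by
    apply pow_lt_pow_left₀ h4 (le_of_lt hspos)
    norm_num
  have h8 : (9:ℝ)/50 * n * ((9:ℝ)/50 * n) ≤ s^2 := by
    rw [hs2]
    have h9 : (0:ℝ) ≤ 9/50 * n := by positivity
    exact mul_le_mul (le_of_lt hAbig) (le_of_lt hBbig) h9 (le_of_lt hApos)
  have e1 : ((n:ℝ)/50)^2 = (n:ℝ)^2/2500 := by ring
  have e2 : (9:ℝ)/50 * n * ((9:ℝ)/50 * n) = 81*(n:ℝ)^2/2500 := by ring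
  have hn2 : (0:ℝ) < (n:ℝ)^2 := by positivity
  rw [e1] at h7
  rw [e2] at h8
  linarith
end Hall


/-- If `G` is an `(n, d, λ)`-graph with `λ < d/50` and `U` is an even-sized vertex subset
such that the induced subgraph `G[U]` has minimum degree at least `9d/10`, then `G[U]`
contains a perfect matching. -/
theorem induced_perfect_matching {n d : ℕ} (lam : ℝ) (G : SimpleGraph (Fin n))
    [DecidableRel G.Adj] (hG : IsNDLGraph G d lam) (hlam : lam < (d : ℝ) / 50)
    (U : Finset (Fin n)) (hUeven : Even U.card)
    (hU : ∀ v ∈ U, 9 * (d : ℝ) / 10 ≤ ((G.neighborFinset v ∩ U).card : ℝ)) :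
    ∃ M : (G.induce (↑U : Set (Fin n))).Subgraph, M.IsPerfectMatching := by
  classical
  obtain ⟨hreg, i₀, hei₀⟩ := hG
  have hei : ∀ i : Fin n, i ≠ i₀ → |adjEigenvalues' G i| ≤ lam := hei₀
  -- trivial case : U = ∅
  by_cases hUemp : U = ∅
  · refine ⟨⊥, fun v _ => ?_, fun v => ?_⟩
    · exact absurd (by simpa [hUemp] using v.2 : (↑v : Fin n) ∈ (∅ : Finset (Fin n))) (by simp)
    · exact absurd (by simpa [hUemp] using v.2 : (↑v : Fin n) ∈ (∅ : Finset (Fin n))) (by simp)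
  have hUne : U.Nonempty := Finset.nonempty_iff_ne_empty.mpr hUemp
  have hn0 : 0 < n := Fin.pos i₀
  -- d > 0
  have hd : 0 < d := by
    by_contra h
    push_neg at h
    have hd0 : d = 0 := by omega
    subst hd0
    have hlamneg : lam < 0 := by simpa using hlam
    by_cases hn1 : 1 < n
    · obtain ⟨j, hj⟩ := Fintype.exists_ne_of_one_lt_card (by simpa using hn1) i₀
      have := hei j hj
      have := abs_nonneg (adjEigenvalues' G j)
      linarith
    · have hcard : U.card ≤ 1 := by
        have := Finset.card_le_univ U
        simp only [Finset.card_univ, Fintype.card_fin] at this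
        omega
      have hpos : 0 < U.card := Finset.card_pos.mpr hUne
      rw [Nat.even_iff] at hUeven
      omega
  have hdR : (0:ℝ) < d := by exact_mod_cast hd
  -- n ≥ 2, lam ≥ 0
  have hdn : d < n := by
    have h1 := G.degree_lt_card_verts i₀
    rw [hreg i₀] at h1
    simpa using h1
  have hn1 : 1 < n := by omega
  have hlam0 : 0 ≤ lam := by
    obtain ⟨j, hj⟩ := Fintype.exists_ne_of_one_lt_card (by simpa using hn1) i₀
    exact (abs_nonneg _).trans (hei j hj)
  have hlamd : lam < (d:ℝ) := by linarith
  have hnR : (0:ℝ) < n := by exact_mod_cast hn0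
  -- degree hypothesis in degR form
  have hUdeg : ∀ v ∈ U, 9*(d:ℝ)/10 ≤ degR G v U := by
    intro v hv
    rw [degR_eq_card]
    exact hU v hv
  -- Step A : |U| > 22/25 n
  have hUcR : (0:ℝ) < U.card := by exact_mod_cast Finset.card_pos.mpr hUne
  have hUn : (22:ℝ)/25 * n < U.card := by
    have hlow : 9*(d:ℝ)/10 * U.card ≤ ew G U U := ew_ge_sum_bound G hUdeg
    have hup := (abs_le.mp (mixing G hreg hei hlam0 hlamd U U)).2
    have hsq : Real.sqrt ((U.card:ℝ) * U.card) = U.card := Real.sqrt_mul_self (by positivity)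
    rw [hsq] at hup
    by_contra hcon
    push_neg at hcon
    have h1 : (d:ℝ) * U.card * U.card / n ≤ (d:ℝ) * U.card * (22/25) := by
      rw [div_le_iff₀ hnR]
      have h2 : (U.card : ℝ) ≤ 22/25 * n := hcon
      nlinarith [mul_pos hdR hUcR]
    have h3 : lam * U.card < (d:ℝ)/50 * U.card := mul_lt_mul_of_pos_right hlam hUcR
    nlinarith [mul_pos hdR hUcR]
  -- halve
  obtain ⟨m, hm⟩ := hUeven
  have hm2 : U.card = 2 * m := by omega
  have hmn : (11:ℝ)/25 * n < m := by
    have : (U.card : ℝ) = 2 * m := by exact_mod_cast hm2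
    linarith
  -- balanced partition
  obtain ⟨X, hXU, hXm, hYm, hdXY, hdYX⟩ :=
    exists_balanced_partition G hreg hei hlam0 hlam hd hm2 hmn hUdeg
  set Y := U \ X with hYdef
  have hYU : Y ⊆ U := Finset.sdiff_subset
  -- Hall
  set t : {x // x ∈ X} → Finset (Fin n) := fun x => G.neighborFinset ↑x ∩ Y with ht
  have hall : ∀ s : Finset {x // x ∈ X}, s.card ≤ (s.biUnion t).card := by
    intro s
    set A := s.image Subtype.val with hA
    have hAX : A ⊆ X := by
      intro a ha
      rcases Finset.mem_image.mp ha with ⟨x, _, rfl⟩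
      exact x.2
    have hcard : A.card = s.card := Finset.card_image_of_injective s Subtype.val_injective
    have hbi : s.biUnion t = A.biUnion (fun a => G.neighborFinset a ∩ Y) := by
      ext z
      simp only [Finset.mem_biUnion, hA, Finset.mem_image]
      constructor
      · rintro ⟨x, hx, hz⟩
        exact ⟨↑x, ⟨x, hx, rfl⟩, hz⟩
      · rintro ⟨a, ⟨x, hx, rfl⟩, hz⟩
        exact ⟨x, hx, hz⟩
    rw [hbi, ← hcard]
    exact hall_ok G hreg hei hlam0 hlam hd hXU hXm hYm hdXY hdYX hAX
  obtain ⟨f, hfinj, hfmem⟩ := (Finset.all_card_le_biUnion_card_iff_exists_injective t).mp hall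
  have hfY : ∀ x, f x ∈ Y := fun x => (Finset.mem_inter.mp (hfmem x)).2
  have hfadj : ∀ x : {x // x ∈ X}, G.Adj ↑x (f x) := fun x =>
    (G.mem_neighborFinset _ _).mp (Finset.mem_inter.mp (hfmem x)).1
  -- image of f is Y
  have himg : Finset.univ.image f = Y := by
    apply Finset.eq_of_subset_of_card_le
    · intro y hy
      rcases Finset.mem_image.mp hy with ⟨x, _, rfl⟩
      exact hfY x
    · rw [Finset.card_image_of_injective _ hfinj, Finset.card_univ, Fintype.card_coe, hXm, hYm]
  have hsurj : ∀ y ∈ Y, ∃ x : {x // x ∈ X}, f x = y := by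
    intro y hy
    rw [← himg] at hy
    rcases Finset.mem_image.mp hy with ⟨x, _, hx⟩
    exact ⟨x, hx⟩
  have hXnotY : ∀ a, a ∈ X → a ∉ Y := fun a ha h => (Finset.mem_sdiff.mp h).2 ha
  -- build the matching
  refine ⟨⟨Set.univ,
    fun a b => (∃ h : (↑a : Fin n) ∈ X, ↑(f ⟨↑a, h⟩) = (↑b : Fin n)) ∨
               (∃ h : (↑b : Fin n) ∈ X, ↑(f ⟨↑b, h⟩) = (↑a : Fin n)),
    ?_, fun _ => Set.mem_univ _, ?_⟩, ?_, fun v => Set.mem_univ v⟩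
  · -- adj_sub
    rintro a b (⟨h, he⟩ | ⟨h, he⟩)
    · have h2 := hfadj ⟨↑a, h⟩
      rw [he] at h2
      exact h2
    · have h2 := hfadj ⟨↑b, h⟩
      rw [he] at h2
      exact h2.symm
  · -- symm
    constructor
    rintro a b (h | h)
    · exact Or.inr h
    · exact Or.inl h
  · -- IsMatching
    intro v _
    have hvU : (↑v : Fin n) ∈ U := by
      have := v.2
      simpa using this
    by_cases hx : (↑v : Fin n) ∈ X
    · have hfxU : (↑(f ⟨↑v, hx⟩) : Fin n) ∈ (↑U : Set (Fin n)) := by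
        simpa using hYU (hfY ⟨↑v, hx⟩)
      refine ⟨⟨f ⟨↑v, hx⟩, hfxU⟩, Or.inl ⟨hx, rfl⟩, ?_⟩
      rintro w (⟨h', he⟩ | ⟨h', he⟩)
      · apply Subtype.ext
        have heq : (⟨↑v, h'⟩ : {x // x ∈ X}) = ⟨↑v, hx⟩ := Subtype.ext rfl
        rw [heq] at he
        exact he.symm
      · exfalso
        have : (↑v : Fin n) ∈ Y := he ▸ hfY ⟨↑w, h'⟩
        exact hXnotY _ hx this
    · have hvY : (↑v : Fin n) ∈ Y := Finset.mem_sdiff.mpr ⟨hvU, hx⟩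
      obtain ⟨x₀, hx₀⟩ := hsurj _ hvY
      have hx₀U : (↑x₀ : Fin n) ∈ (↑U : Set (Fin n)) := by
        simpa using hXU x₀.2
      refine ⟨⟨↑x₀, hx₀U⟩, Or.inr ⟨x₀.2, ?_⟩, ?_⟩
      · have : (⟨↑x₀, x₀.2⟩ : {x // x ∈ X}) = x₀ := Subtype.ext rfl
        rw [this, hx₀]
      · rintro w (⟨h', _⟩ | ⟨h', he⟩)
        · exact absurd h' hx
        · have h3 : f ⟨↑w, h'⟩ = f x₀ := by rw [hx₀]; exact he
          exact Subtype.ext (congrArg (Subtype.val : {x // x ∈ X} → Fin n) (hfinj h3))
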